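/- (Decay near carrying capacity) Let ε > 0 and suppose N(t) ≥ K − ε for all t ≥ 0, with 0 ≤ T, Φ ≤ K solving the glioblastoma ODE reactions. Then Φ'(t) ≤ (γε/K − β₂(K−ε))·Φ(t), and hence Φ(t) ≤ Φ(0)·e^{−(β₂(K−ε) − γε/K)t}; in particular if γε/K < β₂(K−ε) then Φ(t) → 0 exponentially as t → ∞. -/

import Mathlib

noncomputable def f₃ (β₂ γ δ K : ℝ) (T N Φ : ℝ) : ℝ :=
  γ / K * T * Real.sqrt (1 - (Φ / (Φ + T))^2) * Φ * (1 - (T + N + Φ) / K)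
    - δ * T * Φ - β₂ * N * Φ

theorem decay_near_carrying_capacity
    (β₂ γ δ K ε : ℝ)
    (hβ₂ : 0 < β₂) (hγ : 0 < γ) (hδ : 0 < δ) (hK : 0 < K) (hε : 0 < ε)
    (T N Φ : ℝ → ℝ)
    (hTnonneg : ∀ t, 0 ≤ t → 0 ≤ T t) (hTle : ∀ t, 0 ≤ t → T t ≤ K)
    (hΦnonneg : ∀ t, 0 ≤ t → 0 ≤ Φ t)
    (hNlb : ∀ t, 0 ≤ t → K - ε ≤ N t)
    (hΦderiv : ∀ t, 0 ≤ t → HasDerivAt Φ (f₃ β₂ γ δ K (T t) (N t) (Φ t)) t) :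
    (∀ t, 0 ≤ t → f₃ β₂ γ δ K (T t) (N t) (Φ t) ≤ (γ * ε / K - β₂ * (K - ε)) * Φ t) ∧
    (∀ t, 0 ≤ t → Φ t ≤ Φ 0 * Real.exp (-(β₂ * (K - ε) - γ * ε / K) * t)) ∧
    (γ * ε / K < β₂ * (K - ε) → Filter.Tendsto Φ Filter.atTop (nhds 0)) := by
  have key : ∀ t, 0 ≤ t →
      f₃ β₂ γ δ K (T t) (N t) (Φ t) ≤ (γ * ε / K - β₂ * (K - ε)) * Φ t := by
    intro t ht
    have hT0 := hTnonneg t ht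
    have hTK := hTle t ht
    have hΦ0 := hΦnonneg t ht
    have hN := hNlb t ht
    set s := Real.sqrt (1 - (Φ t / (Φ t + T t))^2) with hs
    have hs0 : 0 ≤ s := Real.sqrt_nonneg _
    have hs1 : s ≤ 1 := Real.sqrt_le_one.mpr (by nlinarith [sq_nonneg (Φ t / (Φ t + T t))])
    have hc : 1 - (T t + N t + Φ t) / K ≤ ε / K := by
      have hsum : K - ε ≤ T t + N t + Φ t := by linarith
      have h5 : 1 - (T t + N t + Φ t) / K ≤ 1 - (K - ε) / K := by gcongr
      have h6 : 1 - (K - ε) / K = ε / K := by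
        rw [sub_div, div_self hK.ne']; ring
      linarith
    have hA0 : 0 ≤ γ / K * T t * s * Φ t := by positivity
    have hA : γ / K * T t * s * Φ t ≤ γ * Φ t := by
      have h1 : γ / K * T t * s ≤ γ / K * K * 1 := by
        apply mul_le_mul _ hs1 hs0 (by positivity)
        exact mul_le_mul_of_nonneg_left hTK (by positivity)
      have : γ / K * K * 1 = γ := by field_simp
      rw [this] at h1
      exact mul_le_mul_of_nonneg_right h1 hΦ0
    have hεK : 0 ≤ ε / K := by positivity
    have h2 : γ / K * T t * s * Φ t * (1 - (T t + N t + Φ t) / K) ≤ γ * Φ t * (ε / K) := by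
      calc γ / K * T t * s * Φ t * (1 - (T t + N t + Φ t) / K)
          ≤ γ / K * T t * s * Φ t * (ε / K) := mul_le_mul_of_nonneg_left hc hA0
        _ ≤ γ * Φ t * (ε / K) := mul_le_mul_of_nonneg_right hA hεK
    have h3 : β₂ * (K - ε) * Φ t ≤ β₂ * N t * Φ t := by
      apply mul_le_mul_of_nonneg_right _ hΦ0
      exact mul_le_mul_of_nonneg_left hN hβ₂.le
    have h4 : 0 ≤ δ * T t * Φ t := by positivity
    have : γ * Φ t * (ε / K) = γ * ε / K * Φ t := by ring
    simp only [f₃]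
    nlinarith [h2, h3, h4]
  refine ⟨key, ?_⟩
  set lam := β₂ * (K - ε) - γ * ε / K with hlam
  have main : ∀ t, 0 ≤ t → Φ t ≤ Φ 0 * Real.exp (-lam * t) := by
    intro t ht
    set g : ℝ → ℝ := fun u => Φ u * Real.exp (lam * u) with hg
    have hg' : ∀ u, 0 ≤ u → HasDerivAt g
        ((f₃ β₂ γ δ K (T u) (N u) (Φ u) + lam * Φ u) * Real.exp (lam * u)) u := by
      intro u hu
      have h1 := (hΦderiv u hu).mul (((hasDerivAt_id u).const_mul lam).exp)
      simp only [id_eq, mul_one] at h1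
      rw [show (Φ * fun x => Real.exp (lam * x)) = g from rfl] at h1
      exact h1.congr_deriv (by ring)
    have hanti : AntitoneOn g (Set.Ici (0:ℝ)) := by
      apply antitoneOn_of_deriv_nonpos (convex_Ici 0)
      · intro u hu
        exact ((hg' u hu).continuousAt).continuousWithinAt
      · intro u hu
        rw [interior_Ici] at hu
        exact (hg' u (le_of_lt hu)).differentiableAt.differentiableWithinAt
      · intro u hu
        rw [interior_Ici] at hu
        rw [(hg' u (le_of_lt hu)).deriv]
        have hk := key u (le_of_lt hu)
        have : f₃ β₂ γ δ K (T u) (N u) (Φ u) + lam * Φ u ≤ 0 := by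
          rw [hlam]; nlinarith
        have he : (0:ℝ) ≤ Real.exp (lam * u) := (Real.exp_pos _).le
        exact mul_nonpos_of_nonpos_of_nonneg this he
    have h0 : g t ≤ g 0 := hanti (Set.self_mem_Ici) ht ht
    simp only [hg, mul_zero, Real.exp_zero, mul_one] at h0
    have he : (0:ℝ) < Real.exp (lam * t) := Real.exp_pos _
    rw [neg_mul, Real.exp_neg, ← div_eq_mul_inv, le_div_iff₀ he]
    exact h0
  refine ⟨main, ?_⟩
  intro hlt
  have hlam0 : 0 < lam := by rw [hlam]; linarith
  have hub : Filter.Tendsto (fun t => Φ 0 * Real.exp (-lam * t)) Filter.atTop (nhds 0) := by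
    have h1 : Filter.Tendsto (fun t : ℝ => lam * t) Filter.atTop Filter.atTop :=
      Filter.Tendsto.const_mul_atTop hlam0 Filter.tendsto_id
    have h2 : Filter.Tendsto (fun t : ℝ => Real.exp (-(lam * t))) Filter.atTop (nhds 0) :=
      Real.tendsto_exp_neg_atTop_nhds_zero.comp h1
    have := h2.const_mul (Φ 0)
    simp only [mul_zero] at this
    convert this using 2 with t
    ring_nf
  apply squeeze_zero' (Filter.eventually_atTop.2 ⟨0, fun t ht => hΦnonneg t ht⟩)
    (Filter.eventually_atTop.2 ⟨0, fun t ht => main t ht⟩) hub
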